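/- Let N ≥ 1, let K ∈ ℝ^{N×N} be a symmetric orthogonal projection matrix (K² = K = Kᵀ), and let P ∈ ℝ^{N×N} be a symmetric positive semidefinite matrix with P ≼ λ̲⁻¹·I_N for some λ̲ > 0. Let β₁ > 1/λ̲. Then for all x, y ∈ ℝ^N: (1/2)·xᵀKx + ((1 + β₁)/2)·yᵀPy + xᵀKPy ≥ (1/2 − 1/(2·β₁·λ̲))·(xᵀKx + yᵀPy). In particular the left-hand side is nonnegative. -/

import Mathlib

open Matrix

/-- The Lyapunov quadratic form `(1/2)xᵀKx + ((1+β₁)/2)yᵀPy + xᵀKPy` dominates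
`(1/2 − 1/(2β₁λ̲))(xᵀKx + yᵀPy)` whenever `K` is a symmetric projection, `P` is PSD with
`P ≼ λ̲⁻¹ I`, and `β₁ > 1/λ̲`; in particular it is nonnegative. -/
theorem lyapunov_quadratic_lower_bound (N : ℕ) (hN : 1 ≤ N)
    (K P : Matrix (Fin N) (Fin N) ℝ)
    (hKsym : K.IsSymm) (hKproj : K * K = K)
    (hP : P.PosSemidef)
    (lam : ℝ) (hlam : 0 < lam)
    (hPle : (lam⁻¹ • (1 : Matrix (Fin N) (Fin N) ℝ) - P).PosSemidef)
    (β₁ : ℝ) (hβ₁ : 1 / lam < β₁) :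
    ∀ x y : Fin N → ℝ,
      (1 / 2 - 1 / (2 * β₁ * lam)) * (x ⬝ᵥ K.mulVec x + y ⬝ᵥ P.mulVec y)
        ≤ 1 / 2 * (x ⬝ᵥ K.mulVec x) + (1 + β₁) / 2 * (y ⬝ᵥ P.mulVec y)
          + x ⬝ᵥ K.mulVec (P.mulVec y) ∧
      0 ≤ 1 / 2 * (x ⬝ᵥ K.mulVec x) + (1 + β₁) / 2 * (y ⬝ᵥ P.mulVec y)
          + x ⬝ᵥ K.mulVec (P.mulVec y) := by
  intro x y
  have hβ₁pos : 0 < β₁ := lt_trans (by positivity) hβ₁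
  have hPsym : Pᵀ = P := by
    have := hP.1
    rwa [Matrix.IsHermitian, Matrix.conjTranspose_eq_transpose_of_trivial] at this
  set u := K.mulVec x with hu
  have hvec : ∀ (v w : Fin N → ℝ), v ⬝ᵥ K.mulVec w = K.mulVec v ⬝ᵥ w := by
    intro v w
    rw [Matrix.dotProduct_mulVec, ← Matrix.mulVec_transpose, hKsym.eq]
  have hPvec : ∀ (v w : Fin N → ℝ), v ⬝ᵥ P.mulVec w = P.mulVec v ⬝ᵥ w := by
    intro v w
    rw [Matrix.dotProduct_mulVec, ← Matrix.mulVec_transpose, hPsym]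
  have hKx : x ⬝ᵥ K.mulVec x = u ⬝ᵥ u := by
    conv_lhs => rw [← hKproj, ← Matrix.mulVec_mulVec, hvec]
  have hKPy : x ⬝ᵥ K.mulVec (P.mulVec y) = u ⬝ᵥ P.mulVec y := by
    rw [hvec]
  set a := u ⬝ᵥ u with ha
  set b := u ⬝ᵥ P.mulVec u with hb
  set c := u ⬝ᵥ P.mulVec y with hc
  set d := y ⬝ᵥ P.mulVec y with hd
  have ha0 : 0 ≤ a := Finset.sum_nonneg fun i _ => mul_self_nonneg _
  have hb0 : 0 ≤ b := by simpa using hP.dotProduct_mulVec_nonneg u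
  have hd0 : 0 ≤ d := by simpa using hP.dotProduct_mulVec_nonneg y
  have hba : b ≤ lam⁻¹ * a := by
    have h := hPle.dotProduct_mulVec_nonneg u
    simp only [star_trivial, Matrix.sub_mulVec, Matrix.smul_mulVec,
      Matrix.one_mulVec, dotProduct_sub, dotProduct_smul, smul_eq_mul] at h
    linarith
  have hba2 : lam * b ≤ a := by
    have := mul_le_mul_of_nonneg_left hba hlam.le
    rwa [← mul_assoc, mul_inv_cancel₀ hlam.ne', one_mul] at this
  have hsym : y ⬝ᵥ P.mulVec u = c := by
    rw [hc, hPvec, dotProduct_comm]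
  have hcross : 0 ≤ β₁⁻¹ ^ 2 * b + 2 * β₁⁻¹ * c + d := by
    have h := hP.dotProduct_mulVec_nonneg (β₁⁻¹ • u + y)
    simp only [star_trivial, Matrix.mulVec_add, Matrix.mulVec_smul,
      add_dotProduct, dotProduct_add, smul_dotProduct,
      dotProduct_smul, smul_eq_mul, hsym] at h
    nlinarith [h]
  have key2 : 0 ≤ b + 2 * β₁ * c + β₁ ^ 2 * d := by
    have hne : β₁ ≠ 0 := ne_of_gt hβ₁pos
    have h := mul_nonneg (mul_nonneg hβ₁pos.le hβ₁pos.le) hcross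
    have e : β₁ * β₁ * (β₁⁻¹ ^ 2 * b + 2 * β₁⁻¹ * c + d)
        = b + 2 * β₁ * c + β₁ ^ 2 * d := by
      field_simp
    rw [e] at h
    exact h
  have hbl : 1 < β₁ * lam := by
    have := (div_lt_iff₀ hlam).mp hβ₁
    nlinarith
  have h2bl : (0:ℝ) < 2 * β₁ * lam := by positivity
  rw [hKx, hKPy]
  have main : (1 / 2 - 1 / (2 * β₁ * lam)) * (a + d)
      ≤ 1 / 2 * a + (1 + β₁) / 2 * d + c := by
    have hEq1 : (1 / 2 - 1 / (2 * β₁ * lam)) * (a + d)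
        = ((β₁ * lam - 1) * (a + d)) / (2 * β₁ * lam) := by
      field_simp
    have hEq2 : 1 / 2 * a + (1 + β₁) / 2 * d + c
        = (β₁ * lam * a + (1 + β₁) * (β₁ * lam) * d + 2 * β₁ * lam * c)
          / (2 * β₁ * lam) := by
      field_simp
    rw [hEq1, hEq2]
    rw [div_le_div_iff_of_pos_right h2bl]
    nlinarith [mul_nonneg hlam.le key2, hba2, hd0, mul_nonneg hd0 hlam.le,
      mul_nonneg (mul_nonneg hd0 hlam.le) (sq_nonneg β₁)]
  refine ⟨main, le_trans ?_ main⟩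
  have hcoef : 1 / (2 * β₁ * lam) ≤ 1 / 2 :=
    one_div_le_one_div_of_le two_pos (by nlinarith)
  have : 0 ≤ 1 / 2 - 1 / (2 * β₁ * lam) := by linarith
  exact mul_nonneg this (add_nonneg ha0 hd0)
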